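/- Let n ≥ 1, let z₁, …, z_n be the n distinct real zeros of the physicists' Hermite function H_n, and let w_j = 2^{n−1} · n! · √π / (n² · H_{n−1}(z_j)²). Then each w_j > 0 and ∑_{j=1}^n w_j = √π. -/

import Mathlib

open Polynomial

/-- Physicists' Hermite polynomials via recurrence `P_{n+1} = 2X P_n - P_n'`. -/
noncomputable def HP : ℕ → Polynomial ℝ
  | 0 => 1
  | n+1 => C 2 * X * HP n - derivative (HP n)

lemma HP_deriv : ∀ n : ℕ, derivative (HP (n+1)) = C (2*(n+1) : ℝ) * HP n := by
  intro n
  induction n with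
  | zero => simp [HP]
  | succ m ih =>
    have hd : derivative (HP m) = C 2 * X * HP m - HP (m+1) := by
      rw [show HP (m+1) = C 2 * X * HP m - derivative (HP m) from rfl]; ring
    show derivative (C 2 * X * HP (m+1) - derivative (HP (m+1))) = _
    rw [derivative_sub, derivative_mul, derivative_mul, ih, derivative_mul, hd]
    simp only [derivative_C, derivative_X]
    push_cast
    simp only [map_mul, map_add, map_one, map_ofNat]
    ring

lemma HP_rec (n : ℕ) : HP (n+2) = C 2 * X * HP (n+1) - C (2*(n+1) : ℝ) * HP n := by
  show C 2 * X * HP (n+1) - derivative (HP (n+1)) = _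
  rw [HP_deriv]

noncomputable def physHermite (n : ℕ) (x : ℝ) : ℝ :=
  (-1) ^ n * Real.exp (x ^ 2) * iteratedDeriv n (fun t : ℝ => Real.exp (-t ^ 2)) x

lemma gauss_hasDerivAt (x : ℝ) :
    HasDerivAt (fun t : ℝ => Real.exp (-t ^ 2)) (-2*x * Real.exp (-x ^ 2)) x := by
  have h1 : HasDerivAt (fun t : ℝ => -t ^ 2) (-(2*x)) x := by
    exact ((hasDerivAt_pow 2 x).neg).congr_deriv (by simp)
  simpa [mul_comm] using h1.exp

lemma iteratedDeriv_gauss (n : ℕ) (x : ℝ) :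
    iteratedDeriv n (fun t : ℝ => Real.exp (-t ^ 2)) x
      = (-1) ^ n * Real.exp (-x ^ 2) * (HP n).eval x := by
  induction n generalizing x with
  | zero => simp [HP]
  | succ m ih =>
    have hfun : iteratedDeriv m (fun t : ℝ => Real.exp (-t ^ 2))
        = fun x : ℝ => (-1) ^ m * Real.exp (-x ^ 2) * (HP m).eval x := funext ih
    rw [iteratedDeriv_succ, hfun]
    have hd : HasDerivAt (fun x : ℝ => (-1) ^ m * Real.exp (-x ^ 2) * (HP m).eval x)
        ((-1)^(m+1) * Real.exp (-x ^ 2) * (HP (m+1)).eval x) x := by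
      have := (((gauss_hasDerivAt x).const_mul ((-1:ℝ) ^ m)).mul ((HP m).hasDerivAt x))
      refine this.congr_deriv ?_
      show _ = _
      rw [show HP (m+1) = C 2 * X * HP m - derivative (HP m) from rfl]
      simp [pow_succ]
      ring
    rw [hd.deriv]

lemma physHermite_eq (n : ℕ) (x : ℝ) : physHermite n x = (HP n).eval x := by
  rw [physHermite, iteratedDeriv_gauss]
  rw [show ((-1:ℝ)^n * Real.exp (x^2) * ((-1)^n * Real.exp (-x^2) * (HP n).eval x))
      = ((-1)^n)^2 * (Real.exp (x^2) * Real.exp (-x^2)) * (HP n).eval x by ring]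
  rw [← Real.exp_add, ← pow_mul, mul_comm n 2, pow_mul]
  norm_num

lemma HP_natDegree_le (n : ℕ) : (HP n).natDegree ≤ n := by
  induction n with
  | zero => simp [HP]
  | succ m ih =>
    show (C 2 * X * HP m - derivative (HP m)).natDegree ≤ m + 1
    refine le_trans (natDegree_sub_le _ _) (max_le ?_ ?_)
    · refine le_trans (natDegree_mul_le) ?_
      have : (C (2:ℝ) * X).natDegree ≤ 1 := by
        refine le_trans (natDegree_mul_le) ?_; simp
      omega
    · have := natDegree_derivative_le (HP m)
      omega

lemma HP_coeff_top (n : ℕ) : (HP n).coeff n = 2 ^ n := by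
  induction n with
  | zero => simp [HP]
  | succ m ih =>
    show (C 2 * X * HP m - derivative (HP m)).coeff (m+1) = (2:ℝ) ^ (m+1)
    rw [coeff_sub, coeff_eq_zero_of_natDegree_lt
      (lt_of_le_of_lt (natDegree_derivative_le (HP m)) ?_)]
    · rw [mul_assoc, mul_comm X (HP m), ← mul_assoc, coeff_mul_X, coeff_C_mul, ih]
      ring
    · have := HP_natDegree_le m; omega

lemma HP_natDegree (n : ℕ) : (HP n).natDegree = n := by
  refine le_antisymm (HP_natDegree_le n) (le_natDegree_of_ne_zero ?_)
  rw [HP_coeff_top]; positivity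

lemma HP_ne_zero (n : ℕ) : HP n ≠ 0 := by
  intro h
  have := HP_coeff_top n
  rw [h] at this
  simp only [coeff_zero] at this
  exact pow_ne_zero n two_ne_zero this.symm

/-- Normalized Gaussian moments `g m = (1/√π) ∫ x^m e^{-x²} dx`, defined recursively. -/
noncomputable def gmom : ℕ → ℝ
  | 0 => 1
  | 1 => 0
  | (m+2) => (m+1)/2 * gmom m

/-- The normalized Gaussian moment functional on polynomials. -/
noncomputable def Lfun (p : Polynomial ℝ) : ℝ := p.sum fun m a => a * gmom m

lemma Lfun_add (p q : Polynomial ℝ) : Lfun (p + q) = Lfun p + Lfun q := by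
  unfold Lfun
  exact sum_add_index p q _ (fun i => zero_mul _) (fun a b₁ b₂ => add_mul _ _ _)

lemma Lfun_monomial (m : ℕ) (a : ℝ) : Lfun (monomial m a) = a * gmom m := by
  unfold Lfun
  exact sum_monomial_index a _ (zero_mul _)

lemma Lfun_C_mul (a : ℝ) (p : Polynomial ℝ) : Lfun (C a * p) = a * Lfun p := by
  rw [← smul_eq_C_mul]
  unfold Lfun
  rw [sum_smul_index p a (fun m b => b * gmom m) (fun i => zero_mul _), Polynomial.sum_def, Polynomial.sum_def,
    Finset.mul_sum]
  refine Finset.sum_congr rfl fun m _ => by ring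

lemma Lfun_one : Lfun 1 = 1 := by
  have := Lfun_monomial 0 1
  simpa [gmom] using this

lemma Lfun_deriv (p : Polynomial ℝ) : Lfun (derivative p) = 2 * Lfun (X * p) := by
  induction p using Polynomial.induction_on' with
  | add p q hp hq => rw [derivative_add, mul_add, Lfun_add, Lfun_add, hp, hq]; ring
  | monomial m a =>
    rw [derivative_monomial, X_mul_monomial, Lfun_monomial, Lfun_monomial]
    cases m with
    | zero => simp [gmom]
    | succ k =>
      rw [show gmom (k+1+1) = (k+1)/2 * gmom k from rfl]
      simp only [Nat.add_sub_cancel]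
      push_cast
      ring

lemma HP_one : HP 1 = C 2 * X := by
  show C 2 * X * 1 - derivative 1 = _; simp

lemma CD (y : ℝ) (m : ℕ) :
    (X - C y) * ∑ k ∈ Finset.range (m+1),
        C ((2:ℝ)^(m+1) * (m.factorial : ℝ) / (2^k * (k.factorial : ℝ))) * C ((HP k).eval y) * HP k
      = C ((HP m).eval y) * HP (m+1) - C ((HP (m+1)).eval y) * HP m := by
  induction m with
  | zero =>
    rw [Finset.sum_range_one, HP_one]
    show _ * (_ * _ * HP 0) = _
    rw [show HP 0 = 1 from rfl]
    norm_num
    ring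
  | succ m ih =>
    rw [Finset.sum_range_succ]
    have hfac : ((m+1).factorial : ℝ) ≠ 0 := by
      exact_mod_cast Nat.factorial_ne_zero (m+1)
    have hlast : (2:ℝ)^(m+1+1) * ((m+1).factorial : ℝ) / (2^(m+1) * ((m+1).factorial : ℝ))
        = 2 := by
      field_simp
      ring
    have hco : ∀ k, ((2:ℝ)^(m+1+1) * (((m+1).factorial : ℝ)) / (2^k * (k.factorial : ℝ)))
        = (2*((m:ℝ)+1)) * ((2:ℝ)^(m+1) * (m.factorial : ℝ) / (2^k * (k.factorial : ℝ))) := by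
      intro k
      rw [Nat.factorial_succ]
      push_cast
      ring
    have hsum : ∑ k ∈ Finset.range (m+1),
        C ((2:ℝ)^(m+1+1) * (((m+1).factorial : ℝ)) / (2^k * (k.factorial : ℝ)))
          * C ((HP k).eval y) * HP k
        = C (2*((m:ℝ)+1)) * ∑ k ∈ Finset.range (m+1),
            C ((2:ℝ)^(m+1) * (m.factorial : ℝ) / (2^k * (k.factorial : ℝ)))
              * C ((HP k).eval y) * HP k := by
      rw [Finset.mul_sum]
      refine Finset.sum_congr rfl fun k _ => ?_
      rw [hco k, map_mul]
      ring
    rw [hsum, hlast]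
    have heval : ((HP (m+2)).eval y) = 2*y*((HP (m+1)).eval y) - (2*((m:ℝ)+1))*((HP m).eval y) := by
      rw [HP_rec]; simp
    rw [show m+1+1 = m+2 from rfl, heval, HP_rec]
    rw [mul_add]
    rw [show (X - C y) * (C (2*((m:ℝ)+1)) * ∑ k ∈ Finset.range (m+1),
            C ((2:ℝ)^(m+1) * (m.factorial : ℝ) / (2^k * (k.factorial : ℝ)))
              * C ((HP k).eval y) * HP k)
        = C (2*((m:ℝ)+1)) * ((X - C y) * ∑ k ∈ Finset.range (m+1),
            C ((2:ℝ)^(m+1) * (m.factorial : ℝ) / (2^k * (k.factorial : ℝ)))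
              * C ((HP k).eval y) * HP k) by ring, ih]
    simp only [map_sub, map_mul, map_add, map_ofNat, map_one]
    ring


lemma Lfun_zero : Lfun 0 = 0 := sum_zero_index _

lemma Lfun_sum {ι : Type*} (s : Finset ι) (f : ι → Polynomial ℝ) :
    Lfun (∑ i ∈ s, f i) = ∑ i ∈ s, Lfun (f i) := by
  classical
  induction s using Finset.cons_induction with
  | empty => simpa using Lfun_zero
  | cons a s ha ih => rw [Finset.sum_cons, Finset.sum_cons, Lfun_add, ih]

lemma Lfun_sub (p q : Polynomial ℝ) : Lfun (p - q) = Lfun p - Lfun q := by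
  have : Lfun (-q) = - Lfun q := by
    have := Lfun_C_mul (-1) q
    simpa using this
  rw [sub_eq_add_neg, Lfun_add, this, sub_eq_add_neg]

lemma Lfun_HP (k : ℕ) : Lfun (HP k) = if k = 0 then 1 else 0 := by
  cases k with
  | zero => simpa [HP] using Lfun_one
  | succ k =>
    simp only [Nat.succ_ne_zero, if_false]
    show Lfun (C 2 * X * HP k - derivative (HP k)) = 0
    rw [Lfun_sub, Lfun_deriv, mul_assoc, Lfun_C_mul]
    ring

/-- The Gauss-Hermite quadrature weights `w_j = 2^{n−1} n! √π / (n² H_{n−1}(z_j)²)`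
are positive and sum to `√π`. -/
theorem stmt_12 (n : ℕ) (hn : 1 ≤ n) (z : Fin n → ℝ) (hz : Function.Injective z)
    (hzero : ∀ x : ℝ, physHermite n x = 0 ↔ ∃ j, x = z j)
    (w : Fin n → ℝ)
    (hw : ∀ j, w j = 2 ^ (n - 1) * (n.factorial : ℝ) * Real.sqrt Real.pi /
      ((n : ℝ) ^ 2 * (physHermite (n - 1) (z j)) ^ 2)) :
    (∀ j, 0 < w j) ∧ ∑ j, w j = Real.sqrt Real.pi := by
  classical
  obtain ⟨m, rfl⟩ : ∃ m, n = m + 1 := ⟨n - 1, (Nat.succ_pred_eq_of_pos hn).symm⟩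
  -- roots
  have Hz : ∀ j, (HP (m+1)).eval (z j) = 0 := fun j => by
    have := (hzero (z j)).2 ⟨j, rfl⟩
    rwa [physHermite_eq] at this
  set e : Fin (m+1) → ℝ := fun j => (HP m).eval (z j) with he
  -- the quotient polynomials
  set q : Fin (m+1) → Polynomial ℝ := fun j => HP (m+1) /ₘ (X - C (z j)) with hqdef
  have hq : ∀ j, (X - C (z j)) * q j = HP (m+1) := fun j =>
    mul_divByMonic_eq_iff_isRoot.2 (Hz j)
  -- key identity : e j * Lfun (q j) = 2^(m+1) * m!
  have key : ∀ j, e j * Lfun (q j) = 2^(m+1) * (m.factorial : ℝ) := by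
    intro j
    have hcd := CD (z j) m
    rw [Hz j] at hcd
    simp only [map_zero, zero_mul, sub_zero] at hcd
    rw [← hq j, show C (e j) * ((X - C (z j)) * q j) = (X - C (z j)) * (C (e j) * q j) by ring]
      at hcd
    have hcancel := mul_left_cancel₀ (X_sub_C_ne_zero (z j)) hcd
    have hLS : Lfun (∑ k ∈ Finset.range (m+1),
        C ((2:ℝ)^(m+1) * (m.factorial : ℝ) / (2^k * (k.factorial : ℝ)))
          * C ((HP k).eval (z j)) * HP k) = 2^(m+1) * (m.factorial : ℝ) := by
      rw [Lfun_sum]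
      rw [Finset.sum_eq_single_of_mem 0 (Finset.mem_range.2 (Nat.succ_pos m))]
      · rw [mul_assoc, Lfun_C_mul, Lfun_C_mul, Lfun_HP]
        norm_num [HP]
      · intro k _ hk
        rw [mul_assoc, Lfun_C_mul, Lfun_C_mul, Lfun_HP, if_neg hk]
        ring
    rw [hcancel, Lfun_C_mul] at hLS
    exact hLS
  have hfacpos : (0:ℝ) < (m.factorial : ℝ) := by exact_mod_cast Nat.factorial_pos m
  have hne : ∀ j, e j ≠ 0 := by
    intro j h
    have := key j
    rw [h, zero_mul] at this
    have : (0:ℝ) < 2^(m+1) * (m.factorial : ℝ) := by positivity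
    simp_all
  have hLq : ∀ j, Lfun (q j) = 2^(m+1) * (m.factorial : ℝ) / e j := fun j => by
    rw [eq_div_iff (hne j), mul_comm]
    exact key j
  -- q j evaluated at the nodes
  have hqz : ∀ j, (q j).eval (z j) = 2*((m:ℝ)+1) * e j := by
    intro j
    have hder := congrArg derivative (hq j).symm
    rw [HP_deriv, derivative_mul] at hder
    have := congrArg (Polynomial.eval (z j)) hder
    simpa [he] using this.symm
  have hqz' : ∀ i j, i ≠ j → (q j).eval (z i) = 0 := by
    intro i j hij
    have := congrArg (Polynomial.eval (z i)) (hq j)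
    rw [Hz i] at this
    simp only [eval_mul, eval_sub, eval_X, eval_C] at this
    have hzz : z i - z j ≠ 0 := sub_ne_zero.2 fun h => hij (hz h)
    exact (mul_eq_zero.1 this).resolve_left hzz
  set A : Fin (m+1) → ℝ := fun j => (q j).eval (z j) with hA
  have hAne : ∀ j, A j ≠ 0 := by
    intro j
    have h := hqz j
    rw [hA]
    dsimp only
    rw [h]
    have := hne j
    positivity
  -- Lagrange : the weighted sum of q j equals 1
  have hlag : (∑ j, C (A j)⁻¹ * q j) = 1 := by
    have hR : (∑ j, C (A j)⁻¹ * q j) - 1 = 0 := by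
      apply eq_zero_of_natDegree_lt_card_of_eval_eq_zero _ hz
      · intro i
        rw [eval_sub, eval_finset_sum, eval_one]
        rw [Finset.sum_eq_single_of_mem i (Finset.mem_univ i)]
        · rw [eval_mul, eval_C]
          field_simp [hAne i]
          simp [hA]
        · intro j _ hji
          rw [eval_mul, hqz' i j (fun h => hji h.symm)]
          ring
      · rw [Fintype.card_fin]
        have h1 : ∀ j ∈ (Finset.univ : Finset (Fin (m+1))), (C (A j)⁻¹ * q j).natDegree ≤ m := by
          intro j _
          refine le_trans (natDegree_C_mul_le _ _) ?_
          rw [hqdef]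
          rw [natDegree_divByMonic _ (monic_X_sub_C (z j))]
          simp [HP_natDegree]
        have h2 : (∑ j, C (A j)⁻¹ * q j).natDegree ≤ m :=
          natDegree_sum_le_of_forall_le _ _ h1
        have h3 : ((∑ j, C (A j)⁻¹ * q j) - 1).natDegree ≤ m := by
          refine le_trans (natDegree_sub_le _ _) ?_
          simp [h2]
        omega
    exact sub_eq_zero.mp hR
  -- apply the functional to the Lagrange identity
  have hsum1 : ∑ j, (A j)⁻¹ * Lfun (q j) = 1 := by
    have h := congrArg Lfun hlag
    rw [Lfun_sum, Lfun_one] at h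
    simpa only [Lfun_C_mul] using h
  have hesq : ∀ j, (0:ℝ) < (e j)^2 := fun j =>
    lt_of_le_of_ne (sq_nonneg _) (Ne.symm (pow_ne_zero 2 (hne j)))
  have hph : ∀ j, physHermite (m+1-1) (z j) = e j := by
    intro j
    simp only [Nat.add_sub_cancel]
    rw [physHermite_eq, he]
  have hwval : ∀ j, w j = Real.sqrt Real.pi * ((A j)⁻¹ * Lfun (q j)) := by
    intro j
    rw [hw j, hLq j, hA]
    dsimp only
    rw [hqz j, hph j]
    simp only [Nat.add_sub_cancel]
    have h1 : ((m:ℝ)+1) ≠ 0 := by positivity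
    push_cast [Nat.factorial_succ]
    field_simp [hne j]
    ring
  constructor
  · intro j
    rw [hw j, hph j]
    have hsqrt : (0:ℝ) < Real.sqrt Real.pi := Real.sqrt_pos.2 Real.pi_pos
    apply div_pos
    · positivity
    · apply mul_pos (by positivity) (hesq j)
  · calc ∑ j, w j = ∑ j, Real.sqrt Real.pi * ((A j)⁻¹ * Lfun (q j)) :=
        Finset.sum_congr rfl fun j _ => hwval j
      _ = Real.sqrt Real.pi * ∑ j, (A j)⁻¹ * Lfun (q j) := by rw [← Finset.mul_sum]
      _ = Real.sqrt Real.pi := by rw [hsum1, mul_one]
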